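/- Let n ≥ 1, let λ, μ, ν be partitions of n, and let π be a permutation of Fin n whose orbit type is λ. Then the number of pairs (σ, τ) of permutations of Fin n such that the orbit type of σ is μ, the orbit type of τ is ν, and σ∘τ = π, equals the number of bipartite matchings δ in G_{μ,ν}(π). (In other words, the connection coefficient c^λ_{μν} of the class algebra of the symmetric group equals the number of bipartite matchings in G^λ_{μν}.) -/

import Mathlib

/- For partitions λ, μ, ν of n and a permutation π of Fin n of orbit type λ, the
   number of pairs (σ, τ) of permutations with orbit types μ, ν and σ∘τ = π equals
   the number of bipartite matchings in G_{μ,ν}(π):  c^λ_{μν} = #{bipartite δ ∈ G^λ_{μν}}. -/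

open Equiv

/-- The orbit type of a permutation: the multiset of sizes of the orbits of the cyclic
    group it generates, i.e. its cycle lengths with each fixed point contributing a
    part equal to 1. -/
noncomputable def orbitType {X : Type} [Fintype X] [DecidableEq X]
    (ω : Equiv.Perm X) : Multiset ℕ :=
  ω.cycleType + Multiset.replicate (Finset.univ.filter fun x => ω x = x).card 1

/-- A matching on V: a fixed-point-free involution. -/
def IsMatching {V : Type} (δ : Equiv.Perm V) : Prop :=
  (∀ v, δ (δ v) = v) ∧ ∀ v, δ v ≠ v

/-- A matching on Fin n ⊕ Fin n is bipartite if it sends the left summand into the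
    right summand. -/
def IsBipartite {n : ℕ} (δ : Equiv.Perm (Fin n ⊕ Fin n)) : Prop :=
  ∀ i : Fin n, ∃ j : Fin n, δ (Sum.inl i) = Sum.inr j

/-- The canonical matching g : inl i ↦ inr i, inr i ↦ inl i. -/
def gMatch (n : ℕ) : Equiv.Perm (Fin n ⊕ Fin n) := Equiv.sumComm (Fin n) (Fin n)

/-- The matching b_π : inr i ↦ inl (π i), inl j ↦ inr (π⁻¹ j). -/
def bMatch {n : ℕ} (π : Equiv.Perm (Fin n)) : Equiv.Perm (Fin n ⊕ Fin n) :=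
  (Equiv.sumCongr (π⁻¹ : Equiv.Perm (Fin n)) π).trans (Equiv.sumComm (Fin n) (Fin n))

/-- G_{μ,ν}(π): the matchings δ with orbit type of g∘δ equal to μ ⊎ μ and orbit type
    of b_π∘δ equal to ν ⊎ ν. -/
def Gset {n : ℕ} (μ ν : Multiset ℕ) (π : Equiv.Perm (Fin n)) :
    Set (Equiv.Perm (Fin n ⊕ Fin n)) :=
  {δ | IsMatching δ ∧ orbitType (gMatch n * δ) = μ + μ ∧ orbitType (bMatch π * δ) = ν + ν}

section AuxOrbit
variable {X : Type} [Fintype X] [DecidableEq X]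

lemma fixedCard_eq (ω : Equiv.Perm X) :
    (Finset.univ.filter fun x => ω x = x).card = Fintype.card X - ω.support.card := by
  have : (Finset.univ.filter fun x => ω x = x) = ω.supportᶜ := by
    ext x
    simp [Equiv.Perm.mem_support]
  rw [this, Finset.card_compl]

lemma orbitType_inv (ω : Equiv.Perm X) : orbitType ω⁻¹ = orbitType ω := by
  unfold orbitType
  rw [Equiv.Perm.cycleType_inv, fixedCard_eq, fixedCard_eq, Equiv.Perm.support_inv]

lemma orbitType_conj (ω g : Equiv.Perm X) : orbitType (g * ω * g⁻¹) = orbitType ω := by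
  unfold orbitType
  rw [Equiv.Perm.cycleType_conj, fixedCard_eq, fixedCard_eq, Equiv.Perm.card_support_conj]

end AuxOrbit

section AuxSum
variable {α β : Type} [Fintype α] [DecidableEq α] [Fintype β] [DecidableEq β]

def eqLeft (α β : Type) : α ≃ {x : α ⊕ β // x.isLeft = true} where
  toFun i := ⟨Sum.inl i, rfl⟩
  invFun x := x.1.getLeft x.2
  left_inv i := rfl
  right_inv := by rintro ⟨(a | b), h⟩ <;> simp_all

def eqRight (α β : Type) : β ≃ {x : α ⊕ β // x.isRight = true} where
  toFun i := ⟨Sum.inr i, rfl⟩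
  invFun x := x.1.getRight x.2
  left_inv i := rfl
  right_inv := by rintro ⟨(a | b), h⟩ <;> simp_all

lemma sumCongr_left (a : Perm α) :
    Equiv.sumCongr a (1 : Perm β) = a.extendDomain (eqLeft α β) := by
  ext x
  rcases x with i | j
  · rw [Equiv.Perm.extendDomain_apply_subtype (p := fun x : α ⊕ β => x.isLeft = true) a (eqLeft α β) (b := Sum.inl i) rfl]
    rfl
  · rw [Equiv.Perm.extendDomain_apply_not_subtype _ _ (b := Sum.inr j) (by simp)]
    rfl

lemma sumCongr_right (b : Perm β) :
    Equiv.sumCongr (1 : Perm α) b = b.extendDomain (eqRight α β) := by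
  ext x
  rcases x with i | j
  · rw [Equiv.Perm.extendDomain_apply_not_subtype _ _ (b := Sum.inl i) (by simp)]
    rfl
  · rw [Equiv.Perm.extendDomain_apply_subtype (p := fun x : α ⊕ β => x.isRight = true) b (eqRight α β) (b := Sum.inr j) rfl]
    rfl

lemma disjoint_lr (a : Perm α) (b : Perm β) :
    Equiv.Perm.Disjoint (Equiv.sumCongr a (1 : Perm β)) (Equiv.sumCongr (1 : Perm α) b) := by
  intro x
  rcases x with i | j
  · right; rfl
  · left; rfl

lemma cycleType_sumCongr (a : Perm α) (b : Perm β) :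
    Equiv.Perm.cycleType (Equiv.sumCongr a b) = a.cycleType + b.cycleType := by
  have h : Equiv.sumCongr a b = Equiv.sumCongr a (1 : Perm β) * Equiv.sumCongr (1 : Perm α) b := by
    rw [Equiv.Perm.sumCongr_mul, mul_one, one_mul]
  rw [h, (disjoint_lr a b).cycleType_mul, sumCongr_left, sumCongr_right,
    Equiv.Perm.cycleType_extendDomain, Equiv.Perm.cycleType_extendDomain]

lemma card_support_sumCongr (a : Perm α) (b : Perm β) :
    (Equiv.Perm.support (Equiv.sumCongr a b)).card = a.support.card + b.support.card := by
  have h : Equiv.sumCongr a b = Equiv.sumCongr a (1 : Perm β) * Equiv.sumCongr (1 : Perm α) b := by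
    rw [Equiv.Perm.sumCongr_mul, mul_one, one_mul]
  have hd := disjoint_lr a b
  rw [h, hd.support_mul, Finset.card_union_of_disjoint hd.disjoint_support,
    sumCongr_left, sumCongr_right, Equiv.Perm.card_support_extend_domain,
    Equiv.Perm.card_support_extend_domain]

lemma orbitType_sumCongr (a : Perm α) (b : Perm β) :
    orbitType (Equiv.sumCongr a b) = orbitType a + orbitType b := by
  unfold orbitType
  rw [cycleType_sumCongr, fixedCard_eq, fixedCard_eq, fixedCard_eq, card_support_sumCongr]
  have hc : Fintype.card (α ⊕ β) = Fintype.card α + Fintype.card β := Fintype.card_sum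
  have ha : a.support.card ≤ Fintype.card α := Finset.card_le_univ _
  have hb : b.support.card ≤ Fintype.card β := Finset.card_le_univ _
  have : Fintype.card (α ⊕ β) - (a.support.card + b.support.card)
      = (Fintype.card α - a.support.card) + (Fintype.card β - b.support.card) := by
    omega
  rw [this, Multiset.replicate_add]
  abel

end AuxSum

lemma multiset_double_cancel {a b : Multiset ℕ} (h : a + a = b + b) : a = b := by
  ext x
  have := congrArg (Multiset.count x) h
  simp [Multiset.count_add] at this
  omega

/-- The bipartite matching associated to a permutation f : inl j ↦ inr (f j). -/
def dMatch {n : ℕ} (f : Equiv.Perm (Fin n)) : Equiv.Perm (Fin n ⊕ Fin n) :=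
  (Equiv.sumCongr f (f⁻¹ : Equiv.Perm (Fin n))).trans (Equiv.sumComm (Fin n) (Fin n))

lemma dMatch_inl {n : ℕ} (f : Equiv.Perm (Fin n)) (i : Fin n) :
    dMatch f (Sum.inl i) = Sum.inr (f i) := rfl

lemma dMatch_inr {n : ℕ} (f : Equiv.Perm (Fin n)) (i : Fin n) :
    dMatch f (Sum.inr i) = Sum.inl (f⁻¹ i) := rfl

lemma g_mul_dMatch {n : ℕ} (f : Equiv.Perm (Fin n)) :
    gMatch n * dMatch f = Equiv.sumCongr f (f⁻¹ : Equiv.Perm (Fin n)) := by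
  ext x
  rcases x with i | j <;> rfl

lemma b_mul_dMatch {n : ℕ} (π f : Equiv.Perm (Fin n)) :
    bMatch π * dMatch f = Equiv.sumCongr (π * f) ((f * π)⁻¹ : Equiv.Perm (Fin n)) := by
  ext x
  rcases x with i | j <;> rfl

lemma dMatch_isMatching {n : ℕ} (f : Equiv.Perm (Fin n)) : IsMatching (dMatch f) := by
  constructor
  · intro v
    rcases v with i | j
    · rw [dMatch_inl, dMatch_inr]; simp
    · rw [dMatch_inr, dMatch_inl]; simp
  · intro v
    rcases v with i | j <;> simp [dMatch_inl, dMatch_inr]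

lemma dMatch_bipartite {n : ℕ} (f : Equiv.Perm (Fin n)) : IsBipartite (dMatch f) :=
  fun i => ⟨f i, rfl⟩

lemma dMatch_injective {n : ℕ} : Function.Injective (dMatch (n := n)) := by
  intro f g h
  ext i
  have h2 : f i = g i := by
    simpa [dMatch_inl] using congrArg (fun δ => δ (Sum.inl i)) h
  simp [h2]

theorem class_connection_coefficients_eq_bipartite_matchings
    (n : ℕ) (hn : 1 ≤ n) (l m v : Multiset ℕ)
    (hl : (∀ a ∈ l, 0 < a) ∧ l.sum = n)
    (hm : (∀ a ∈ m, 0 < a) ∧ m.sum = n)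
    (hv : (∀ a ∈ v, 0 < a) ∧ v.sum = n)
    (π : Equiv.Perm (Fin n)) (hπ : orbitType π = l) :
    Set.ncard {st : Equiv.Perm (Fin n) × Equiv.Perm (Fin n) |
        orbitType st.1 = m ∧ orbitType st.2 = v ∧ st.1 * st.2 = π}
      = Set.ncard {δ | δ ∈ Gset m v π ∧ IsBipartite δ} := by
  classical
  set S := {st : Equiv.Perm (Fin n) × Equiv.Perm (Fin n) |
        orbitType st.1 = m ∧ orbitType st.2 = v ∧ st.1 * st.2 = π}
  set T := {δ | δ ∈ Gset m v π ∧ IsBipartite δ}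
  set Φ : Equiv.Perm (Fin n) × Equiv.Perm (Fin n) → Equiv.Perm (Fin n ⊕ Fin n) :=
    fun st => dMatch st.1⁻¹
  have himg : Φ '' S = T := by
    ext δ
    constructor
    · rintro ⟨⟨σ, τ⟩, ⟨hσ, hτ, hστ⟩, rfl⟩
      have hτ' : τ = σ⁻¹ * π := by rw [← hστ]; group
      refine ⟨⟨dMatch_isMatching _, ?_, ?_⟩, dMatch_bipartite _⟩
      · rw [g_mul_dMatch, orbitType_sumCongr, inv_inv, orbitType_inv, hσ]
      · rw [b_mul_dMatch, orbitType_sumCongr, orbitType_inv]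
        have h1 : π * σ⁻¹ = σ * τ * σ⁻¹ := by rw [hστ]
        have h2 : σ⁻¹ * π = τ := by rw [hτ']
        rw [h1, orbitType_conj, hτ, h2, hτ]
    · rintro ⟨⟨hmatch, hg, hb⟩, hbip⟩
      -- extract the permutation f with δ (inl i) = inr (f i)
      have hf : ∀ i : Fin n, ∃ j, δ (Sum.inl i) = Sum.inr j := hbip
      choose f hfspec using hf
      have hfinj : Function.Injective f := by
        intro i j hij
        have : δ (Sum.inl i) = δ (Sum.inl j) := by rw [hfspec, hfspec, hij]
        simpa using δ.injective this
      have hfbij : Function.Bijective f := (Finite.injective_iff_bijective).mp hfinj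
      set fe : Equiv.Perm (Fin n) := Equiv.ofBijective f hfbij with hfe
      have hfe_apply : ∀ i, fe i = f i := fun i => rfl
      have hδ : δ = dMatch fe := by
        ext x
        rcases x with i | j
        · rw [dMatch_inl, hfe_apply, hfspec]
        · obtain ⟨i, rfl⟩ := hfbij.2 j
          rw [dMatch_inr]
          have : δ (Sum.inr (f i)) = Sum.inl i := by
            rw [← hfspec, hmatch.1]
          rw [this]
          congr 1
          have : fe i = f i := rfl
          rw [← this]; simp
      refine ⟨(fe⁻¹, fe * π), ⟨?_, ?_, by group⟩, ?_⟩
      · -- orbitType fe⁻¹ = m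
        rw [hδ, g_mul_dMatch, orbitType_sumCongr] at hg
        rw [orbitType_inv] at hg ⊢
        exact multiset_double_cancel hg
      · -- orbitType (fe * π) = v
        rw [hδ, b_mul_dMatch, orbitType_sumCongr, orbitType_inv] at hb
        have hconj : π * fe = fe⁻¹ * (fe * π) * fe⁻¹⁻¹ := by group
        rw [hconj, orbitType_conj] at hb
        exact multiset_double_cancel hb
      · show dMatch fe⁻¹⁻¹ = δ
        rw [inv_inv, hδ]
  have hinj : Set.InjOn Φ S := by
    rintro ⟨σ₁, τ₁⟩ ⟨-, -, h1⟩ ⟨σ₂, τ₂⟩ ⟨-, -, h2⟩ h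
    have hσ : σ₁ = σ₂ := by
      have := dMatch_injective h
      exact inv_injective this
    subst hσ
    have hτ : τ₁ = τ₂ := by
      have := h1.trans h2.symm
      exact mul_left_cancel this
    rw [hτ]
  rw [← himg, Set.ncard_image_of_injOn hinj]
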